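/- Let C be a ternary [12,5] code satisfying conditions (C1)–(C3). Then the minimum weight of C is either 4 or 6; in particular C has no nonzero codeword of weight less than 4 and no codeword of weight 5. -/

import Mathlib

open Finset

/-- Hamming weight of a vector over `ZMod 3`. -/
def wt {n : ℕ} (v : Fin n → ZMod 3) : ℕ :=
  (Finset.univ.filter fun i => v i ≠ 0).card

/-- Projection of a length-12 vector onto its first 10 coordinates. -/
def punc (c : Fin 12 → ZMod 3) : Fin 10 → ZMod 3 :=
  fun i => c (Fin.castLE (by norm_num) i)

/-- The linear projection deleting the last two coordinates. -/
def projL : (Fin 12 → ZMod 3) →ₗ[ZMod 3] (Fin 10 → ZMod 3) :=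
  LinearMap.funLeft (ZMod 3) (ZMod 3) (Fin.castLE (by norm_num : (10:ℕ) ≤ 12))

/-- A set of vectors has minimum (nonzero) weight `d`. -/
def hasMinWt {n : ℕ} (S : Set (Fin n → ZMod 3)) (d : ℕ) : Prop :=
  (∃ w ∈ S, w ≠ 0 ∧ wt w = d) ∧ ∀ w ∈ S, w ≠ 0 → d ≤ wt w

lemma wt_split (c : Fin 12 → ZMod 3) :
    wt c = wt (punc c) + ((if c 10 ≠ 0 then 1 else 0) + (if c 11 ≠ 0 then 1 else 0)) := by
  classical
  set p : Fin 12 → Prop := fun i => (i : ℕ) < 10 with hp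
  have h1 : (univ.filter fun i : Fin 12 => c i ≠ 0)
      = ((univ.filter fun i : Fin 12 => c i ≠ 0).filter p)
        ∪ ((univ.filter fun i : Fin 12 => c i ≠ 0).filter fun i => ¬ p i) :=
    (filter_union_filter_not_eq _ _).symm
  have hdisj : Disjoint ((univ.filter fun i : Fin 12 => c i ≠ 0).filter p)
      ((univ.filter fun i : Fin 12 => c i ≠ 0).filter fun i => ¬ p i) :=
    disjoint_filter_filter_not _ _ _
  have hA : ((univ.filter fun i : Fin 12 => c i ≠ 0).filter p).card
      = wt (punc c) := by
    unfold wt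
    apply card_bij' (fun (i : Fin 12) hi => (⟨(i:ℕ), by simp [mem_filter, hp] at hi; exact hi.2⟩ : Fin 10))
      (fun (j : Fin 10) hj => Fin.castLE (by norm_num) j)
    · intro a ha; rfl
    · intro a ha; rfl
    · intro a ha
      simp [mem_filter, hp] at ha ⊢
      simpa [punc, Fin.castLE] using ha.1
    · intro a ha
      simp [mem_filter, punc, hp] at ha ⊢
      exact (mem_filter.mp ha).2
  have hB : ((univ.filter fun i : Fin 12 => c i ≠ 0).filter fun i => ¬ p i)
      = ({10, 11} : Finset (Fin 12)).filter (fun i => c i ≠ 0) := by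
    ext i
    simp only [mem_filter, mem_univ, true_and, mem_insert, mem_singleton, hp]
    constructor
    · rintro ⟨h, h10⟩
      refine ⟨?_, h⟩
      have := i.isLt
      rcases Nat.lt_or_ge (i:ℕ) 11 with h' | h'
      · left; exact Fin.ext (by omega)
      · right; exact Fin.ext (by omega)
    · rintro ⟨h10, h⟩
      rcases h10 with rfl | rfl <;> simp [h] <;> decide
  have hBcard : (({10, 11} : Finset (Fin 12)).filter (fun i => c i ≠ 0)).card
      = ((if c 10 ≠ 0 then 1 else 0) + (if c 11 ≠ 0 then 1 else 0)) := by
    have h1011 : (10 : Fin 12) ≠ 11 := by decide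
    rw [show ({10, 11} : Finset (Fin 12)) = insert 10 {11} from rfl, filter_insert,
      filter_singleton]
    by_cases h10 : c 10 ≠ 0 <;> by_cases h11 : c 11 ≠ 0 <;>
      simp [h10, h11, h1011]
  unfold wt
  rw [h1, card_union_of_disjoint hdisj, hA, hB, hBcard]
  rfl

lemma wt_punc_le (c : Fin 12 → ZMod 3) : wt (punc c) ≤ 10 := by
  have := Finset.card_filter_le (univ : Finset (Fin 10)) (fun i => punc c i ≠ 0)
  simpa [wt] using this

lemma wt_classify (C : Submodule (ZMod 3) (Fin 12 → ZMod 3))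
    (hC1 : ∀ c ∈ C, ((wt (punc c) : ZMod 3) = c 10 * c 11))
    (hC2 : ∀ c ∈ C, c ≠ 0 → 3 ≤ wt (punc c))
    (hC3 : ∀ c ∈ C, wt (punc c) = 3 → ¬(c 10 = 0 ∧ c 11 = 0)) :
    ∀ c ∈ C, c ≠ 0 → wt c = 4 ∨ 6 ≤ wt c := by
  intro c hc hc0
  have h1 := hC1 c hc
  have h2 := hC2 c hc hc0
  have hw10 := wt_punc_le c
  have hsplit := wt_split c
  by_cases h10 : c 10 = 0 <;> by_cases h11 : c 11 = 0
  · have h0 : ((wt (punc c) : ZMod 3)) = 0 := by rw [h1, h10]; ring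
    have hdvd : 3 ∣ wt (punc c) := (ZMod.natCast_eq_zero_iff _ 3).mp h0
    have hne3 : wt (punc c) ≠ 3 := fun h => hC3 c hc h ⟨h10, h11⟩
    simp only [h10, h11, ne_eq, not_true_eq_false, if_false] at hsplit
    omega
  · have h0 : ((wt (punc c) : ZMod 3)) = 0 := by rw [h1, h10]; ring
    have hdvd : 3 ∣ wt (punc c) := (ZMod.natCast_eq_zero_iff _ 3).mp h0
    simp only [h10, h11, ne_eq, not_true_eq_false, if_false, not_false_eq_true, if_true] at hsplit
    omega
  · have h0 : ((wt (punc c) : ZMod 3)) = 0 := by rw [h1, h11]; ring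
    have hdvd : 3 ∣ wt (punc c) := (ZMod.natCast_eq_zero_iff _ 3).mp h0
    simp only [h10, h11, ne_eq, not_true_eq_false, if_false, not_false_eq_true, if_true] at hsplit
    omega
  · have hnd : ¬ (3 ∣ wt (punc c)) := by
      intro hdvd
      have h0 : ((wt (punc c) : ZMod 3)) = 0 := (ZMod.natCast_eq_zero_iff _ 3).mpr hdvd
      rw [h1] at h0
      exact (mul_ne_zero h10 h11) h0
    simp only [h10, h11, ne_eq, not_false_eq_true, if_true] at hsplit
    omega

set_option maxHeartbeats 1000000 in
lemma no_big (C : Submodule (ZMod 3) (Fin 12 → ZMod 3))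
    (hdim : Module.finrank (ZMod 3) C = 5)
    (hC1 : ∀ c ∈ C, ((wt (punc c) : ZMod 3) = c 10 * c 11))
    (hC2 : ∀ c ∈ C, c ≠ 0 → 3 ≤ wt (punc c))
    (hC3 : ∀ c ∈ C, wt (punc c) = 3 → ¬(c 10 = 0 ∧ c 11 = 0))
    (hbig : ∀ c ∈ C, c ≠ 0 → 7 ≤ wt c) : False := by
  classical
  -- the linear map recording the last two coordinates
  set φ : C →ₗ[ZMod 3] (ZMod 3 × ZMod 3) :=
    LinearMap.prod ((LinearMap.proj (10 : Fin 12)).comp C.subtype)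
      ((LinearMap.proj (11 : Fin 12)).comp C.subtype) with hφ
  have hker : 3 ≤ Module.finrank (ZMod 3) (LinearMap.ker φ) := by
    have hrn := LinearMap.finrank_range_add_finrank_ker φ
    rw [hdim] at hrn
    have hle : Module.finrank (ZMod 3) (LinearMap.range φ) ≤ 2 := by
      have := Submodule.finrank_le (LinearMap.range φ)
      simpa using this
    omega
  -- push the kernel down into the ambient space
  set K : Submodule (ZMod 3) (Fin 12 → ZMod 3) := (LinearMap.ker φ).map C.subtype with hK
  have hKC : K ≤ C := by rw [hK]; exact Submodule.map_subtype_le _ _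
  have hKrank : 3 ≤ Module.finrank (ZMod 3) K := by
    rw [hK, (LinearEquiv.finrank_eq (Submodule.equivMapOfInjective C.subtype
      (Submodule.injective_subtype C) (LinearMap.ker φ))).symm] at *
    exact hker
  have hK1011 : ∀ v ∈ K, v 10 = 0 ∧ v 11 = 0 := by
    intro v hv
    rw [hK, Submodule.mem_map] at hv
    obtain ⟨y, hy, rfl⟩ := hv
    rw [LinearMap.mem_ker, hφ] at hy
    exact ⟨congrArg Prod.fst hy, congrArg Prod.snd hy⟩
  clear_value φ
  clear hφ hker
  set n := Module.finrank (ZMod 3) K with hn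
  have b := Module.finBasis (ZMod 3) K
  rw [← hn] at b
  set i0 : Fin n := ⟨0, by omega⟩ with hi0
  set i1 : Fin n := ⟨1, by omega⟩ with hi1
  have hi01 : i0 ≠ i1 := by
    intro h
    rw [Fin.ext_iff] at h
    simp [hi0, hi1] at h
  set e : Fin 12 → ZMod 3 := (b i0 : Fin 12 → ZMod 3) with he
  set f : Fin 12 → ZMod 3 := (b i1 : Fin 12 → ZMod 3) with hf
  have heK : e ∈ K := (b i0).2
  have hfK : f ∈ K := (b i1).2
  have heC : e ∈ C := hKC heK
  have hfC : f ∈ C := hKC hfK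
  have he10 : e 10 = 0 := (hK1011 e heK).1
  have he11 : e 11 = 0 := (hK1011 e heK).2
  have hf10 : f 10 = 0 := (hK1011 f hfK).1
  have hf11 : f 11 = 0 := (hK1011 f hfK).2
  -- nonzero combinations
  have hcomb : ∀ a bb : ZMod 3, a • e + bb • f = 0 → a = 0 ∧ bb = 0 := by
    intro a bb h
    have h0 : a • b i0 + bb • b i1 = 0 := by
      apply Subtype.ext
      push_cast
      exact h
    have hr0 := congrArg (fun x => (b.repr x) i0) h0
    have hr1 := congrArg (fun x => (b.repr x) i1) h0
    simp [Module.Basis.repr_self, Finsupp.single_apply, hi01, hi01.symm] at hr0 hr1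
    exact ⟨hr0, hr1⟩
  have hene : e ≠ 0 := by
    intro h
    have := hcomb 1 0 (by rw [h]; simp)
    simp at this
  have hfne : f ≠ 0 := by
    intro h
    have := hcomb 0 1 (by rw [h]; simp)
    simp at this
  have hefne : e + f ≠ 0 := by
    intro h
    have := hcomb 1 1 (by simpa using h)
    simp at this
  have hefne' : e - f ≠ 0 := by
    intro h
    have := hcomb 1 (-1) (by
      have heq : (1 : ZMod 3) • e + (-1 : ZMod 3) • f = e - f := by
        simp [sub_eq_add_neg]
      rw [heq]; exact h)
    simp at this
  -- every nonzero codeword vanishing on the last two coordinates has weight 9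
  have wt9 : ∀ c ∈ C, c ≠ 0 → c 10 = 0 → c 11 = 0 → wt c = 9 := by
    intro c hc hc0 h10 h11
    have h1 := hC1 c hc
    have h2 := hC2 c hc hc0
    have hw10 := wt_punc_le c
    have h0 : ((wt (punc c) : ZMod 3)) = 0 := by rw [h1, h10]; ring
    have hdvd : 3 ∣ wt (punc c) := (ZMod.natCast_eq_zero_iff _ 3).mp h0
    have hne3 : wt (punc c) ≠ 3 := fun h => hC3 c hc h ⟨h10, h11⟩
    have hsplit := wt_split c
    have h7 := hbig c hc hc0
    simp only [h10, h11, ne_eq, not_true_eq_false, if_false] at hsplit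
    omega
  -- weights
  have hwe : wt e = 9 := wt9 e heC hene he10 he11
  have hwf : wt f = 9 := wt9 f hfC hfne hf10 hf11
  have hwef : wt (e + f) = 9 := by
    apply wt9 (e + f) (C.add_mem heC hfC) hefne
    · simp [he10, hf10]
    · simp [he11, hf11]
  have hwef' : wt (e - f) = 9 := by
    apply wt9 (e - f) (C.sub_mem heC hfC) hefne'
    · simp [he10, hf10]
    · simp [he11, hf11]
  -- counting argument
  set T : Finset (Fin 12) := univ.filter (fun i => i ≠ 10 ∧ i ≠ 11) with hT
  have hTcard : T.card = 10 := by decide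
  have hsub : ∀ (v : Fin 12 → ZMod 3), v 10 = 0 → v 11 = 0 →
      (univ.filter fun i => v i ≠ 0) ⊆ T := by
    intro v hv10 hv11 i hi
    simp only [mem_filter, mem_univ, true_and] at hi
    simp only [hT, mem_filter, mem_univ, true_and]
    constructor
    · rintro rfl; exact hi hv10
    · rintro rfl; exact hi hv11
  set A : Finset (Fin 12) := univ.filter (fun i => e i ≠ 0) with hA
  set B : Finset (Fin 12) := univ.filter (fun i => f i ≠ 0) with hB
  set Sp : Finset (Fin 12) := univ.filter (fun i => e i + f i ≠ 0) with hSp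
  set Sm : Finset (Fin 12) := univ.filter (fun i => e i - f i ≠ 0) with hSm
  have hAcard : A.card = 9 := hwe
  have hBcard : B.card = 9 := hwf
  have hSpcard : Sp.card = 9 := by rw [← hwef]; rfl
  have hSmcard : Sm.card = 9 := by rw [← hwef']; rfl
  have hAT : A ⊆ T := hsub e he10 he11
  have hBT : B ⊆ T := hsub f hf10 hf11
  have hSpT : Sp ⊆ T := by
    have h := hsub (e + f) (by simp [he10, hf10]) (by simp [he11, hf11])
    intro i hi
    apply h
    simp only [mem_filter, mem_univ, true_and, Pi.add_apply]
    simpa [hSp, mem_filter] using hi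
  have hSmT : Sm ⊆ T := by
    have h := hsub (e - f) (by simp [he10, hf10]) (by simp [he11, hf11])
    intro i hi
    apply h
    simp only [mem_filter, mem_univ, true_and, Pi.sub_apply]
    simpa [hSm, mem_filter] using hi
  have hABU : (A ∪ B).card ≤ 10 := by
    rw [← hTcard]; exact card_le_card (union_subset hAT hBT)
  have hABI : 8 ≤ (A ∩ B).card := by
    have := card_union_add_card_inter A B
    omega
  have hkey : Sp ∩ Sm ⊆ T \ (A ∩ B) := by
    intro i hi
    rw [mem_inter] at hi
    rw [mem_sdiff]
    refine ⟨hSpT hi.1, ?_⟩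
    have h1 : e i + f i ≠ 0 := by simpa [hSp, mem_filter] using hi.1
    have h2 : e i - f i ≠ 0 := by simpa [hSm, mem_filter] using hi.2
    have hz : ∀ a b : ZMod 3, a + b ≠ 0 → a - b ≠ 0 → ¬(a ≠ 0 ∧ b ≠ 0) := by decide
    simp only [hA, hB, mem_inter, mem_filter, mem_univ, true_and]
    intro hx
    exact hz (e i) (f i) h1 h2 ⟨hx.1, hx.2⟩
  have hABIT : A ∩ B ⊆ T := (inter_subset_left).trans hAT
  have hcount : (Sp ∩ Sm).card ≤ 2 := by
    have h1 : (Sp ∩ Sm).card ≤ (T \ (A ∩ B)).card := card_le_card hkey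
    rw [card_sdiff_of_subset hABIT] at h1
    omega
  have hU : (Sp ∪ Sm).card ≤ 10 := by
    rw [← hTcard]; exact card_le_card (union_subset hSpT hSmT)
  have := card_union_add_card_inter Sp Sm
  omega

theorem stmt14 (C : Submodule (ZMod 3) (Fin 12 → ZMod 3))
    (hdim : Module.finrank (ZMod 3) C = 5)
    (hC1 : ∀ c ∈ C, ((wt (punc c) : ZMod 3) = c 10 * c 11))
    (hC2 : ∀ c ∈ C, c ≠ 0 → 3 ≤ wt (punc c))
    (hC3 : ∀ c ∈ C, wt (punc c) = 3 → ¬(c 10 = 0 ∧ c 11 = 0)) :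
    (hasMinWt (C : Set (Fin 12 → ZMod 3)) 4 ∨ hasMinWt (C : Set (Fin 12 → ZMod 3)) 6) ∧
    ∀ c ∈ C, c ≠ 0 → 4 ≤ wt c ∧ wt c ≠ 5 := by
  have hkey := wt_classify C hC1 hC2 hC3
  constructor
  · by_cases h4 : ∃ c ∈ C, c ≠ 0 ∧ wt c = 4
    · left
      obtain ⟨c, hc, hc0, hc4⟩ := h4
      exact ⟨⟨c, hc, hc0, hc4⟩, fun w hw hw0 => by
        rcases hkey w hw hw0 with h | h <;> omega⟩
    · right
      constructor
      · by_contra h6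
        push_neg at h6
        apply no_big C hdim hC1 hC2 hC3
        intro c hc hc0
        rcases hkey c hc hc0 with h | h
        · exact absurd ⟨c, hc, hc0, h⟩ h4
        · have : wt c ≠ 6 := fun hh => h6 c hc hc0 hh
          omega
      · intro w hw hw0
        rcases hkey w hw hw0 with h | h
        · exact absurd ⟨w, hw, hw0, h⟩ h4
        · exact h
  · intro c hc hc0
    rcases hkey c hc hc0 with h | h <;> constructor <;> omega
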